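/- Let φ^α be the skewed normal density with location μ, scale σ, skewness α ∈ (0,1) (piecewise Gaussian with scale 2ασ on the left of μ and 2(1−α)σ on the right), and let f_ν^α be the AST density with the same μ, σ, α. Then D(f_ν^α ‖ φ^α) = D(f_ν^{1/2} ‖ φ^{1/2}), i.e. the KL divergence from the AST density to the skewed normal with matching skewness does not depend on α. -/

import Mathlib

open Real MeasureTheory Filter Topology

noncomputable def K (ν : ℝ) : ℝ := Real.Gamma ((ν+1)/2) / (Real.sqrt (π * ν) * Real.Gamma (ν/2))

noncomputable def ast (α ν μ σ x : ℝ) : ℝ :=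
  if x ≤ μ then (K ν / σ) * (1 + (1/ν) * ((x-μ)/(2*α*σ))^2) ^ (-(ν+1)/2)
  else (K ν / σ) * (1 + (1/ν) * ((x-μ)/(2*(1-α)*σ))^2) ^ (-(ν+1)/2)

noncomputable def tdens (ν y : ℝ) : ℝ := K ν * (1 + y^2/ν) ^ (-(ν+1)/2)

noncomputable def skewNormal (α μ σ x : ℝ) : ℝ :=
  if x ≤ μ then (1/(σ * Real.sqrt (2*π))) * Real.exp (-((x-μ)/(2*α*σ))^2)
  else (1/(σ * Real.sqrt (2*π))) * Real.exp (-((x-μ)/(2*(1-α)*σ))^2)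

open Set in
/-- The even profile function: `tdens` times the log of the (σ-free) density ratio. -/
noncomputable def Gf (ν t : ℝ) : ℝ :=
  tdens ν t * Real.log (tdens ν t * (Real.sqrt (2*π) * Real.exp (t^2)))

lemma Gf_even (ν t : ℝ) : Gf ν (-t) = Gf ν t := by
  simp [Gf, tdens, neg_sq]

open Set in
lemma ast_kl_pointwise (α ν μ σ x : ℝ) (hα : α ∈ Set.Ioo (0:ℝ) 1) (hσ : 0 < σ) :
    ast α ν μ σ x * Real.log (ast α ν μ σ x / skewNormal α μ σ x)
      = (1/σ) * ((Set.indicator (Iic (0:ℝ)) (Gf ν)) ((x - μ)/(2*α*σ))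
          + (Set.indicator (Ioi (0:ℝ)) (Gf ν)) ((x - μ)/(2*(1-α)*σ))) := by
  obtain ⟨hα0, hα1⟩ := hα
  have hs2 : (0:ℝ) < Real.sqrt (2*π) := Real.sqrt_pos.mpr (by positivity)
  have hσ' : σ ≠ 0 := hσ.ne'
  by_cases hx : x ≤ μ
  · set t := (x - μ)/(2*α*σ) with ht
    have hd : (0:ℝ) < 2*α*σ := by positivity
    have h1α : (0:ℝ) < 1 - α := by linarith
    have hd2 : (0:ℝ) < 2*(1-α)*σ := by positivity
    have ht1 : t ≤ 0 := div_nonpos_of_nonpos_of_nonneg (by linarith) hd.le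
    have ht2 : (x - μ)/(2*(1-α)*σ) ≤ 0 := div_nonpos_of_nonpos_of_nonneg (by linarith) hd2.le
    rw [Set.indicator_of_mem (by exact ht1 : t ∈ Iic (0:ℝ)),
        Set.indicator_of_notMem (by simpa using ht2)]
    have hast : ast α ν μ σ x = (1/σ) * tdens ν t := by
      rw [ast, if_pos hx, tdens]
      have : 1 + (1/ν) * t^2 = 1 + t^2/ν := by ring
      rw [← ht, this]; ring
    have hskew : skewNormal α μ σ x = (1/(σ * Real.sqrt (2*π))) * Real.exp (-t^2) := by
      rw [skewNormal, if_pos hx]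
    have hratio : ast α ν μ σ x / skewNormal α μ σ x
        = tdens ν t * (Real.sqrt (2*π) * Real.exp (t^2)) := by
      rw [hast, hskew, Real.exp_neg]
      have he : Real.exp (t^2) ≠ 0 := Real.exp_ne_zero _
      field_simp
    rw [hratio, hast, Gf]
    ring
  · set t := (x - μ)/(2*(1-α)*σ) with ht
    have hd : (0:ℝ) < 2*α*σ := by positivity
    have h1α : (0:ℝ) < 1 - α := by linarith
    have hd2 : (0:ℝ) < 2*(1-α)*σ := by positivity
    push_neg at hx
    have ht1 : 0 < (x - μ)/(2*α*σ) := div_pos (by linarith) hd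
    have ht2 : 0 < t := div_pos (by linarith) hd2
    rw [Set.indicator_of_notMem (by simpa using ht1),
        Set.indicator_of_mem (by exact ht2 : t ∈ Ioi (0:ℝ))]
    have hast : ast α ν μ σ x = (1/σ) * tdens ν t := by
      rw [ast, if_neg (not_le.mpr hx), tdens]
      have : 1 + (1/ν) * t^2 = 1 + t^2/ν := by ring
      rw [← ht, this]; ring
    have hskew : skewNormal α μ σ x = (1/(σ * Real.sqrt (2*π))) * Real.exp (-t^2) := by
      rw [skewNormal, if_neg (not_le.mpr hx)]
    have hratio : ast α ν μ σ x / skewNormal α μ σ x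
        = tdens ν t * (Real.sqrt (2*π) * Real.exp (t^2)) := by
      rw [hast, hskew, Real.exp_neg]
      have he : Real.exp (t^2) ≠ 0 := Real.exp_ne_zero _
      field_simp
    rw [hratio, hast, Gf]
    ring

open Set in
lemma shift_scale_integral (H : ℝ → ℝ) (μ c : ℝ) (hc : 0 < c) :
    (∫ x : ℝ, H ((x - μ)/c)) = c * ∫ t : ℝ, H t := by
  rw [MeasureTheory.integral_sub_right_eq_self (fun y => H (y/c)) μ,
    MeasureTheory.Measure.integral_comp_div H c, abs_of_pos hc, smul_eq_mul]

open scoped Classical in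
open Set in
/-- The key computation: the KL integrand integrates to a value independent of `α`. -/
lemma ast_kl_value (α ν μ σ : ℝ) (hα : α ∈ Set.Ioo (0:ℝ) 1) (hσ : 0 < σ) :
    (∫ x : ℝ, ast α ν μ σ x * Real.log (ast α ν μ σ x / skewNormal α μ σ x))
      = if IntegrableOn (Gf ν) (Ioi (0:ℝ)) then 2 * ∫ t in Ioi (0:ℝ), Gf ν t else 0 := by
  obtain ⟨hα0, hα1⟩ := hα
  have hσ' : σ ≠ 0 := hσ.ne'
  have h1α : (0:ℝ) < 1 - α := by linarith
  set H₁ : ℝ → ℝ := Set.indicator (Iic (0:ℝ)) (Gf ν) with hH₁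
  set H₂ : ℝ → ℝ := Set.indicator (Ioi (0:ℝ)) (Gf ν) with hH₂
  set a₁ : ℝ := 2*α*σ with ha₁def
  set a₂ : ℝ := 2*(1-α)*σ with ha₂def
  have ha₁ : 0 < a₁ := by positivity
  have ha₂ : 0 < a₂ := by positivity
  have hfun : (fun x : ℝ => ast α ν μ σ x * Real.log (ast α ν μ σ x / skewNormal α μ σ x))
      = fun x : ℝ => (1/σ) * (H₁ ((x - μ)/a₁) + H₂ ((x - μ)/a₂)) :=
    funext fun x => ast_kl_pointwise α ν μ σ x ⟨hα0, hα1⟩ hσ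
  have hae : (fun x : ℝ => H₂ (-x)) =ᵐ[(volume : Measure ℝ)] H₁ := by
    have h0 : ∀ᵐ x : ℝ, x ≠ 0 := by
      rw [ae_iff]
      have : {x : ℝ | ¬ x ≠ 0} = {0} := by ext x; simp
      rw [this, Real.volume_singleton]
    filter_upwards [h0] with x hx
    rcases lt_or_gt_of_ne hx with h | h
    · have e1 : H₂ (-x) = Gf ν (-x) := Set.indicator_of_mem (by simpa using h) _
      have e2 : H₁ x = Gf ν x := Set.indicator_of_mem (show x ∈ Iic (0:ℝ) from h.le) _
      rw [e1, e2, Gf_even]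
    · have e1 : H₂ (-x) = 0 := Set.indicator_of_notMem (by simp only [Set.mem_Ioi, not_lt]; linarith) _
      have e2 : H₁ x = 0 := Set.indicator_of_notMem (by simpa using h) _
      rw [e1, e2]
  by_cases hInt : IntegrableOn (Gf ν) (Ioi (0:ℝ))
  · -- integrable case
    have hH2 : Integrable H₂ :=
      (integrable_indicator_iff measurableSet_Ioi).mpr hInt
    have hH2n : Integrable (fun x : ℝ => H₂ (-x)) := by
      have := hH2.comp_mul_left' (show (-1:ℝ) ≠ 0 by norm_num)
      simpa [neg_one_mul] using this
    have hH1 : Integrable H₁ := hH2n.congr hae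
    have hF1 : Integrable (fun x : ℝ => H₁ ((x - μ)/a₁)) :=
      Integrable.comp_sub_right (hH1.comp_div ha₁.ne') μ
    have hF2 : Integrable (fun x : ℝ => H₂ ((x - μ)/a₂)) :=
      Integrable.comp_sub_right (hH2.comp_div ha₂.ne') μ
    have hIic : (∫ t in Iic (0:ℝ), Gf ν t) = ∫ t in Ioi (0:ℝ), Gf ν t := by
      have := integral_comp_neg_Iic (0:ℝ) (Gf ν)
      simp only [neg_zero] at this
      rw [← this]
      exact setIntegral_congr_fun measurableSet_Iic fun x _ => (Gf_even ν x).symm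
    rw [if_pos hInt, hfun]
    rw [MeasureTheory.integral_const_mul, integral_add hF1 hF2,
      shift_scale_integral H₁ μ a₁ ha₁, shift_scale_integral H₂ μ a₂ ha₂]
    rw [hH₁, hH₂, integral_indicator measurableSet_Iic, integral_indicator measurableSet_Ioi,
      hIic, ha₁def, ha₂def]
    field_simp
    ring
  · -- non-integrable case: the Bochner integral is zero
    rw [if_neg hInt, hfun]
    refine integral_undef fun hI => hInt ?_
    have hsum : Integrable (fun x : ℝ => H₁ ((x - μ)/a₁) + H₂ ((x - μ)/a₂)) := by
      have := hI.const_mul σ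
      refine this.congr (Filter.Eventually.of_forall fun x => ?_)
      field_simp
    have hindeq : Set.indicator (Ioi μ) (fun x : ℝ => H₁ ((x - μ)/a₁) + H₂ ((x - μ)/a₂))
        = fun x : ℝ => H₂ ((x - μ)/a₂) := by
      funext x
      by_cases hx : x ∈ Ioi μ
      · rw [Set.indicator_of_mem hx]
        have h1 : (x - μ)/a₁ ∉ Iic (0:ℝ) := by
          simp only [Set.mem_Iic, not_le]
          exact div_pos (by simpa using hx) ha₁
        rw [hH₁, Set.indicator_of_notMem h1, zero_add]
      · rw [Set.indicator_of_notMem hx]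
        have h2 : (x - μ)/a₂ ∉ Ioi (0:ℝ) := by
          simp only [Set.mem_Ioi, not_lt]
          exact div_nonpos_of_nonpos_of_nonneg (by simp at hx; linarith) ha₂.le
        rw [hH₂, Set.indicator_of_notMem h2]
    have hF2 : Integrable (fun x : ℝ => H₂ ((x - μ)/a₂)) := by
      rw [← hindeq]
      exact hsum.indicator measurableSet_Ioi
    have hg : Integrable (fun y : ℝ => H₂ (y/a₂)) := by
      have := Integrable.comp_sub_right hF2 (-μ)
      simpa using this
    have hH2 : Integrable H₂ := (integrable_comp_div_iff H₂ ha₂.ne').mp hg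
    exact (integrable_indicator_iff measurableSet_Ioi).mp hH2

theorem ast_kl_to_skewNormal_independent (α ν μ σ : ℝ) (hα : α ∈ Set.Ioo (0:ℝ) 1)
    (hν : 1 ≤ ν) (hσ : 0 < σ) :
    ∫ x : ℝ, ast α ν μ σ x * Real.log (ast α ν μ σ x / skewNormal α μ σ x)
      = ∫ x : ℝ, ast (1/2) ν μ σ x * Real.log (ast (1/2) ν μ σ x / skewNormal (1/2) μ σ x) := by
  rw [ast_kl_value α ν μ σ hα hσ,
    ast_kl_value (1/2) ν μ σ (by constructor <;> norm_num) hσ]
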